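/- Let G and H be graphs with chromatic colourings on disjoint colour sets of sizes χ(G) and χ(H) respectively, and consider the induced colouring of the join G + H with χ(G) + χ(H) colours. A vertex v ∈ V(G) yields a rainbow neighbourhood in G + H if and only if v yields a rainbow neighbourhood in G (and symmetrically for vertices of H). Moreover, a set F ⊆ V(G+H) is a fade set of G + H if and only if F ∩ V(G) is a fade set of G and F ∩ V(H) is a fade set of H; hence f(G + H) = f(G) + f(H). -/

import Mathlib

def closedNbr {V : Type*} [Fintype V] [DecidableEq V] (G : SimpleGraph V)
    [DecidableRel G.Adj] (u : V) : Finset V :=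
  insert u (G.neighborFinset u)

def YieldsRainbow {V : Type*} [Fintype V] [DecidableEq V] (G : SimpleGraph V)
    [DecidableRel G.Adj] {k : ℕ} (c : V → Fin k) (u : V) : Prop :=
  ∀ i : Fin k, ∃ v ∈ closedNbr G u, c v = i

def IsFadeSet {V : Type*} [Fintype V] [DecidableEq V] (G : SimpleGraph V)
    [DecidableRel G.Adj] {k : ℕ} (c : V → Fin k) (F : Finset V) : Prop :=
  ∀ u : V, YieldsRainbow G c u →
    ∀ i : Fin k, ∃ v ∈ closedNbr G u, c v = i ∧ v ∉ F

noncomputable def fadingNumber {V : Type*} [Fintype V] [DecidableEq V]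
    (G : SimpleGraph V) [DecidableRel G.Adj] {k : ℕ} (c : V → Fin k) : ℕ :=
  sSup {m | ∃ F : Finset V, IsFadeSet G c F ∧ F.card = m}

lemma mem_closedNbr {V : Type*} [Fintype V] [DecidableEq V] (G : SimpleGraph V)
    [DecidableRel G.Adj] {u v : V} : v ∈ closedNbr G u ↔ v = u ∨ G.Adj u v := by
  simp [closedNbr]

lemma exists_rainbow {V : Type*} [Fintype V] [DecidableEq V] (G : SimpleGraph V)
    [DecidableRel G.Adj] {n : ℕ} (c : V → Fin (n+1))
    (hp : ∀ u v : V, G.Adj u v → c u ≠ c v)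
    (hχ : G.chromaticNumber = (n+1 : ℕ)) : ∃ u, YieldsRainbow G c u := by
  by_contra h
  push_neg at h
  simp only [YieldsRainbow, not_forall, not_exists] at h
  choose miss hmiss using h
  have hmiss' : ∀ u, ∀ v ∈ closedNbr G u, c v ≠ miss u := by
    intro u v hv heq
    exact hmiss u v ⟨hv, heq⟩
  set c' : V → Fin (n+1) := fun u => if c u = Fin.last n then miss u else c u with hc'
  have hne : ∀ u, c' u ≠ Fin.last n := by
    intro u heq
    simp only [hc'] at heq
    by_cases hcu : c u = Fin.last n
    · rw [if_pos hcu] at heq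
      exact hmiss' u u (by simp [mem_closedNbr]) (by rw [hcu, heq])
    · rw [if_neg hcu] at heq
      exact hcu heq
  have hp' : ∀ u v : V, G.Adj u v → c' u ≠ c' v := by
    intro u v huv
    by_cases hcu : c u = Fin.last n <;> by_cases hcv : c v = Fin.last n
    · exact absurd (hcu.trans hcv.symm) (hp u v huv)
    · simp only [hc']
      simp only [if_pos hcu, if_neg hcv]
      intro heq
      exact hmiss' u v (by simp [mem_closedNbr, huv]) heq.symm
    · simp only [hc']
      simp only [if_neg hcu, if_pos hcv]
      intro heq
      exact hmiss' v u (by simp [mem_closedNbr, huv.symm]) heq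
    · simp only [hc']
      simp only [if_neg hcu, if_neg hcv]
      exact hp u v huv
  have hcol : G.Colorable n := by
    refine ⟨SimpleGraph.Coloring.mk (fun u => (c' u).castPred (hne u)) ?_⟩
    intro u v huv heq
    exact hp' u v huv (by
      have := congrArg (Fin.castSucc) heq
      simpa using this)
  have hle : G.chromaticNumber ≤ n := hcol.chromaticNumber_le
  rw [hχ] at hle
  exact absurd (Nat.cast_le.mp hle) (by omega)

lemma fade_witness {V : Type*} [Fintype V] [DecidableEq V] (G : SimpleGraph V)
    [DecidableRel G.Adj] {k : ℕ} (c : V → Fin k)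
    (hp : ∀ u v : V, G.Adj u v → c u ≠ c v)
    (hχ : G.chromaticNumber = k) {F : Finset V}
    (hF : ∀ u : V, YieldsRainbow G c u →
      ∀ i : Fin k, ∃ v ∈ closedNbr G u, c v = i ∧ v ∉ F)
    (i : Fin k) : ∃ v : V, c v = i ∧ v ∉ F := by
  cases k with
  | zero => exact i.elim0
  | succ n =>
    obtain ⟨u, hu⟩ := exists_rainbow G c hp hχ
    obtain ⟨v, _, hv, hvF⟩ := hF u hu i
    exact ⟨v, hv, hvF⟩

lemma surj_of_chrom {V : Type*} [Fintype V] [DecidableEq V] (G : SimpleGraph V)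
    [DecidableRel G.Adj] {k : ℕ} (c : V → Fin k)
    (hp : ∀ u v : V, G.Adj u v → c u ≠ c v)
    (hχ : G.chromaticNumber = k) : Function.Surjective c := by
  intro i
  have := fade_witness G c hp hχ (F := ∅)
    (fun u hu j => by obtain ⟨v, hv, hcv⟩ := hu j; exact ⟨v, hv, hcv, by simp⟩) i
  obtain ⟨v, hv, _⟩ := this
  exact ⟨v, hv⟩

/-- The join `G + H` of two graphs on disjoint vertex sets. -/
def joinGraphs {V W : Type*} (G : SimpleGraph V) (H : SimpleGraph W) :
    SimpleGraph (V ⊕ W) where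
  Adj u v :=
    match u, v with
    | .inl a, .inl b => G.Adj a b
    | .inr a, .inr b => H.Adj a b
    | .inl _, .inr _ => True
    | .inr _, .inl _ => True
  symm := by
    constructor
    intro u v h
    match u, v with
    | .inl a, .inl b => exact G.symm.symm _ _ h
    | .inr a, .inr b => exact H.symm.symm _ _ h
    | .inl _, .inr _ => trivial
    | .inr _, .inl _ => trivial
  loopless := by
    constructor
    intro u h
    match u with
    | .inl a => exact G.loopless.irrefl a h
    | .inr a => exact H.loopless.irrefl a h

instance joinGraphs.decAdj {V W : Type*} (G : SimpleGraph V) (H : SimpleGraph W)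
    [DecidableRel G.Adj] [DecidableRel H.Adj] :
    DecidableRel (joinGraphs G H).Adj
  | .inl a, .inl b => inferInstanceAs (Decidable (G.Adj a b))
  | .inr a, .inr b => inferInstanceAs (Decidable (H.Adj a b))
  | .inl _, .inr _ => inferInstanceAs (Decidable True)
  | .inr _, .inl _ => inferInstanceAs (Decidable True)

/-- The combined colouring of the join, on `χ(G) + χ(H)` colours. -/
def joinColour {V W : Type*} {k m : ℕ} (c : V → Fin k) (d : W → Fin m) :
    V ⊕ W → Fin (k + m) :=
  Sum.elim (fun v => (c v).castAdd m) (fun w => (d w).natAdd k)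

section JoinLemmas
variable {V W : Type*} [Fintype V] [DecidableEq V] [Fintype W] [DecidableEq W]
  (G : SimpleGraph V) (H : SimpleGraph W) [DecidableRel G.Adj] [DecidableRel H.Adj]

lemma inl_mem_closedNbr_inl {a v : V} :
    (Sum.inl a : V ⊕ W) ∈ closedNbr (joinGraphs G H) (Sum.inl v) ↔ a ∈ closedNbr G v := by
  rw [mem_closedNbr, mem_closedNbr]
  exact or_congr (by simp) Iff.rfl

lemma inr_mem_closedNbr_inl {v : V} (w : W) :
    (Sum.inr w : V ⊕ W) ∈ closedNbr (joinGraphs G H) (Sum.inl v) := by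
  rw [mem_closedNbr]
  exact Or.inr trivial

lemma inr_mem_closedNbr_inr {a w : W} :
    (Sum.inr a : V ⊕ W) ∈ closedNbr (joinGraphs G H) (Sum.inr w) ↔ a ∈ closedNbr H w := by
  rw [mem_closedNbr, mem_closedNbr]
  exact or_congr (by simp) Iff.rfl

lemma inl_mem_closedNbr_inr {w : W} (v : V) :
    (Sum.inl v : V ⊕ W) ∈ closedNbr (joinGraphs G H) (Sum.inr w) := by
  rw [mem_closedNbr]
  exact Or.inr trivial

end JoinLemmas

lemma natAdd_injective {k m : ℕ} : Function.Injective (@Fin.natAdd k m) := by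
  intro i j h
  have := congrArg Fin.val h
  simp only [Fin.natAdd] at this
  exact Fin.ext (by omega)

lemma zero_mem_fade_sets {V : Type*} [Fintype V] [DecidableEq V] (G : SimpleGraph V)
    [DecidableRel G.Adj] {k : ℕ} (c : V → Fin k) :
    (0 : ℕ) ∈ {m | ∃ F : Finset V, IsFadeSet G c F ∧ F.card = m} :=
  ⟨∅, fun u hu i => by obtain ⟨v, hv, hcv⟩ := hu i; exact ⟨v, hv, hcv, by simp⟩,
    Finset.card_empty⟩

lemma bdd_fade_sets {V : Type*} [Fintype V] [DecidableEq V] (G : SimpleGraph V)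
    [DecidableRel G.Adj] {k : ℕ} (c : V → Fin k) :
    BddAbove {m | ∃ F : Finset V, IsFadeSet G c F ∧ F.card = m} := by
  refine ⟨Fintype.card V, ?_⟩
  rintro n ⟨F, _, rfl⟩
  simpa using Finset.card_le_card F.subset_univ

lemma card_preimage_sum {V W : Type*} [DecidableEq V] [DecidableEq W]
    (F : Finset (V ⊕ W)) :
    (F.preimage Sum.inl Sum.inl_injective.injOn).card +
      (F.preimage Sum.inr Sum.inr_injective.injOn).card = F.card := by
  have h1 : F.preimage Sum.inl Sum.inl_injective.injOn = F.toLeft := by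
    ext a; simp
  have h2 : F.preimage Sum.inr Sum.inr_injective.injOn = F.toRight := by
    ext a; simp
  rw [h1, h2, Finset.card_toLeft_add_card_toRight]

theorem stmt_9 {V W : Type*} [Fintype V] [DecidableEq V] [Fintype W] [DecidableEq W]
    (G : SimpleGraph V) (H : SimpleGraph W) [DecidableRel G.Adj] [DecidableRel H.Adj]
    {k m : ℕ} (c : V → Fin k) (d : W → Fin m)
    (hpc : ∀ u v : V, G.Adj u v → c u ≠ c v)
    (hpd : ∀ u v : W, H.Adj u v → d u ≠ d v)
    (hcG : G.chromaticNumber = k) (hcH : H.chromaticNumber = m) :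
    (∀ v : V, YieldsRainbow (joinGraphs G H) (joinColour c d) (Sum.inl v) ↔
      YieldsRainbow G c v) ∧
    (∀ w : W, YieldsRainbow (joinGraphs G H) (joinColour c d) (Sum.inr w) ↔
      YieldsRainbow H d w) ∧
    (∀ F : Finset (V ⊕ W),
      IsFadeSet (joinGraphs G H) (joinColour c d) F ↔
        IsFadeSet G c (F.preimage Sum.inl Sum.inl_injective.injOn) ∧
        IsFadeSet H d (F.preimage Sum.inr Sum.inr_injective.injOn)) ∧
    fadingNumber (joinGraphs G H) (joinColour c d) =
      fadingNumber G c + fadingNumber H d := by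
  have hsurj_c : Function.Surjective c := surj_of_chrom G c hpc hcG
  have hsurj_d : Function.Surjective d := surj_of_chrom H d hpd hcH
  have part1 : ∀ v : V, YieldsRainbow (joinGraphs G H) (joinColour c d) (Sum.inl v) ↔
      YieldsRainbow G c v := by
    intro v
    constructor
    · intro hr i
      obtain ⟨x, hx, hcx⟩ := hr (Fin.castAdd m i)
      match x with
      | Sum.inl a =>
        simp only [joinColour, Sum.elim_inl] at hcx
        exact ⟨a, (inl_mem_closedNbr_inl G H).mp hx, Fin.castAdd_injective _ _ hcx⟩
      | Sum.inr w =>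
        exfalso
        have := congrArg Fin.val hcx
        simp [joinColour, Fin.natAdd, Fin.castAdd, Fin.castLE] at this
        omega
    · intro hr i
      refine Fin.addCases (fun i₀ => ?_) (fun j => ?_) i
      · obtain ⟨a, ha, hca⟩ := hr i₀
        exact ⟨Sum.inl a, (inl_mem_closedNbr_inl G H).mpr ha, by simp [joinColour, hca]⟩
      · obtain ⟨w, hw⟩ := hsurj_d j
        exact ⟨Sum.inr w, inr_mem_closedNbr_inl G H w, by simp [joinColour, hw]⟩
  have part2 : ∀ w : W, YieldsRainbow (joinGraphs G H) (joinColour c d) (Sum.inr w) ↔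
      YieldsRainbow H d w := by
    intro w
    constructor
    · intro hr i
      obtain ⟨x, hx, hcx⟩ := hr (Fin.natAdd k i)
      match x with
      | Sum.inl a =>
        exfalso
        have := congrArg Fin.val hcx
        simp [joinColour, Fin.natAdd, Fin.castAdd, Fin.castLE] at this
        omega
      | Sum.inr b =>
        simp only [joinColour, Sum.elim_inr] at hcx
        exact ⟨b, (inr_mem_closedNbr_inr G H).mp hx, natAdd_injective hcx⟩
    · intro hr i
      refine Fin.addCases (fun i₀ => ?_) (fun j => ?_) i
      · obtain ⟨v, hv⟩ := hsurj_c i₀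
        exact ⟨Sum.inl v, inl_mem_closedNbr_inr G H v, by simp [joinColour, hv]⟩
      · obtain ⟨b, hb, hdb⟩ := hr j
        exact ⟨Sum.inr b, (inr_mem_closedNbr_inr G H).mpr hb, by simp [joinColour, hdb]⟩
  have part3 : ∀ F : Finset (V ⊕ W),
      IsFadeSet (joinGraphs G H) (joinColour c d) F ↔
        IsFadeSet G c (F.preimage Sum.inl Sum.inl_injective.injOn) ∧
        IsFadeSet H d (F.preimage Sum.inr Sum.inr_injective.injOn) := by
    intro F
    constructor
    · intro hF
      constructor
      · intro u hu i
        obtain ⟨x, hx, hcx, hxF⟩ := hF (Sum.inl u) ((part1 u).mpr hu) (Fin.castAdd m i)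
        match x with
        | Sum.inl a =>
          simp only [joinColour, Sum.elim_inl] at hcx
          exact ⟨a, (inl_mem_closedNbr_inl G H).mp hx, Fin.castAdd_injective _ _ hcx,
            by simpa [Finset.mem_preimage] using hxF⟩
        | Sum.inr b =>
          exfalso
          have := congrArg Fin.val hcx
          simp [joinColour, Fin.natAdd, Fin.castAdd, Fin.castLE] at this
          omega
      · intro u hu i
        obtain ⟨x, hx, hcx, hxF⟩ := hF (Sum.inr u) ((part2 u).mpr hu) (Fin.natAdd k i)
        match x with
        | Sum.inl a =>
          exfalso
          have := congrArg Fin.val hcx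
          simp [joinColour, Fin.natAdd, Fin.castAdd, Fin.castLE] at this
          omega
        | Sum.inr b =>
          simp only [joinColour, Sum.elim_inr] at hcx
          exact ⟨b, (inr_mem_closedNbr_inr G H).mp hx, natAdd_injective hcx,
            by simpa [Finset.mem_preimage] using hxF⟩
    · rintro ⟨hFG, hFH⟩ x hx j
      match x with
      | Sum.inl u =>
        have hu := (part1 u).mp hx
        refine Fin.addCases (fun i => ?_) (fun i => ?_) j
        · obtain ⟨a, ha, hca, haF⟩ := hFG u hu i
          exact ⟨Sum.inl a, (inl_mem_closedNbr_inl G H).mpr ha,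
            by simp [joinColour, hca], by simpa [Finset.mem_preimage] using haF⟩
        · obtain ⟨w, hw, hwF⟩ := fade_witness H d hpd hcH hFH i
          exact ⟨Sum.inr w, inr_mem_closedNbr_inl G H w,
            by simp [joinColour, hw], by simpa [Finset.mem_preimage] using hwF⟩
      | Sum.inr u =>
        have hu := (part2 u).mp hx
        refine Fin.addCases (fun i => ?_) (fun i => ?_) j
        · obtain ⟨v, hv, hvF⟩ := fade_witness G c hpc hcG hFG i
          exact ⟨Sum.inl v, inl_mem_closedNbr_inr G H v,
            by simp [joinColour, hv], by simpa [Finset.mem_preimage] using hvF⟩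
        · obtain ⟨b, hb, hdb, hbF⟩ := hFH u hu i
          exact ⟨Sum.inr b, (inr_mem_closedNbr_inr G H).mpr hb,
            by simp [joinColour, hdb], by simpa [Finset.mem_preimage] using hbF⟩
  refine ⟨part1, part2, part3, ?_⟩
  have bddJ := bdd_fade_sets (joinGraphs G H) (joinColour c d)
  have bddG := bdd_fade_sets G c
  have bddH := bdd_fade_sets H d
  show sSup _ = sSup _ + sSup _
  apply le_antisymm
  · obtain ⟨F, hF, hcard⟩ :=
      Nat.sSup_mem ⟨0, zero_mem_fade_sets (joinGraphs G H) (joinColour c d)⟩ bddJ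
    obtain ⟨hFG, hFH⟩ := (part3 F).mp hF
    rw [← hcard, ← card_preimage_sum F]
    exact add_le_add (le_csSup bddG ⟨_, hFG, rfl⟩) (le_csSup bddH ⟨_, hFH, rfl⟩)
  · obtain ⟨FG, hFG, hcardG⟩ := Nat.sSup_mem ⟨0, zero_mem_fade_sets G c⟩ bddG
    obtain ⟨FH, hFH, hcardH⟩ := Nat.sSup_mem ⟨0, zero_mem_fade_sets H d⟩ bddH
    set F : Finset (V ⊕ W) :=
      FG.map ⟨Sum.inl, Sum.inl_injective⟩ ∪ FH.map ⟨Sum.inr, Sum.inr_injective⟩ with hFdef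
    have hpre1 : F.preimage Sum.inl Sum.inl_injective.injOn = FG := by
      ext a; simp [hFdef]
    have hpre2 : F.preimage Sum.inr Sum.inr_injective.injOn = FH := by
      ext a; simp [hFdef]
    have hfade : IsFadeSet (joinGraphs G H) (joinColour c d) F :=
      (part3 F).mpr ⟨by rw [hpre1]; exact hFG, by rw [hpre2]; exact hFH⟩
    have hdisj : Disjoint (FG.map ⟨Sum.inl, Sum.inl_injective⟩)
        (FH.map ⟨Sum.inr, Sum.inr_injective⟩) := by
      rw [Finset.disjoint_left]
      rintro x hx hx'
      simp only [Finset.mem_map, Function.Embedding.coeFn_mk] at hx hx'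
      obtain ⟨a, _, rfl⟩ := hx
      obtain ⟨b, _, hb⟩ := hx'
      exact absurd hb (by simp)
    have hcardF : F.card = sSup {n | ∃ F' : Finset V, IsFadeSet G c F' ∧ F'.card = n} +
        sSup {n | ∃ F' : Finset W, IsFadeSet H d F' ∧ F'.card = n} := by
      rw [hFdef, Finset.card_union_of_disjoint hdisj, Finset.card_map, Finset.card_map,
        hcardG, hcardH]
    rw [← hcardF]
    exact le_csSup bddJ ⟨F, hfade, rfl⟩
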